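/- arXiv:2605.28668 — 4 statements merged into one kernel-verified Lean document; each statement's English description precedes it below -/
import Mathlib

section
/- Equality |A|^n = n^{n/2} |det A| holds for a real n×n matrix A (with Frobenius norm) if and only if A is a conformal matrix, i.e. AᵀA = λ·Id for some λ ≥ 0. -/
noncomputable def frobNorm {n : ℕ} (A : Matrix (Fin n) (Fin n) ℝ) : ℝ :=
  Real.sqrt (Matrix.trace (A.transpose * A))

/-- Equality `‖A‖ⁿ = n^{n/2} |det A|` (Frobenius norm) holds for a real
`n × n` matrix `A` iff `A` is conformal, i.e. `Aᵀ A = λ • Id` for some `λ ≥ 0`. -/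
theorem frobenius_pow_eq_det_iff_conformal {n : ℕ} (hn : 2 ≤ n)
    (A : Matrix (Fin n) (Fin n) ℝ) :
    frobNorm A ^ n = (n : ℝ) ^ ((n : ℝ) / 2) * |A.det| ↔
      ∃ lam : ℝ, 0 ≤ lam ∧ A.transpose * A = lam • (1 : Matrix (Fin n) (Fin n) ℝ) := by
  have hn0 : (0:ℝ) < n := by positivity
  have hP : (A.transpose * A).PosSemidef := by
    have := Matrix.posSemidef_conjTranspose_mul_self A
    simpa using this
  have hB : (A.transpose * A).IsHermitian := hP.isHermitian
  set μ := hB.eigenvalues with hμ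
  have hμ0 : ∀ i, 0 ≤ μ i := fun i => hP.eigenvalues_nonneg i
  set S := Matrix.trace (A.transpose * A) with hS
  have htr : S = ∑ i, μ i := by
    rw [hS]
    nth_rewrite 1 [hB.spectral_theorem]
    rw [Unitary.conjStarAlgAut_apply, Matrix.trace_mul_cycle]
    rw [(Matrix.mem_unitaryGroup_iff').mp (Matrix.IsHermitian.eigenvectorUnitary hB).2]
    simp [Matrix.trace_diagonal]; rfl
  have hS0 : 0 ≤ S := htr ▸ Finset.sum_nonneg fun i _ => hμ0 i
  have hdet : A.det ^ 2 = ∏ i, μ i := by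
    have h1 : (A.transpose * A).det = ∏ i, μ i := by
      rw [hB.det_eq_prod_eigenvalues]; norm_num; rfl
    rw [← h1, Matrix.det_mul, Matrix.det_transpose, sq]
  -- reduce the equality to `S ^ n = n ^ n * ∏ μ`
  have key : (frobNorm A ^ n = (n : ℝ) ^ ((n : ℝ) / 2) * |A.det|) ↔
      S ^ n = (n : ℝ) ^ n * ∏ i, μ i := by
    have hL : 0 ≤ frobNorm A ^ n := pow_nonneg (Real.sqrt_nonneg _) n
    have hR : 0 ≤ (n : ℝ) ^ ((n : ℝ) / 2) * |A.det| :=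
      mul_nonneg (Real.rpow_nonneg hn0.le _) (abs_nonneg _)
    rw [← sq_eq_sq₀ hL hR]
    have e1 : (frobNorm A ^ n) ^ 2 = S ^ n := by
      rw [← pow_mul, mul_comm n 2, pow_mul, frobNorm, ← hS, Real.sq_sqrt hS0]
    have e2 : ((n : ℝ) ^ ((n : ℝ) / 2) * |A.det|) ^ 2 = (n : ℝ) ^ n * ∏ i, μ i := by
      rw [mul_pow, sq_abs, hdet, ← Real.rpow_natCast ((n:ℝ) ^ ((n:ℝ)/2)) 2,
        ← Real.rpow_mul hn0.le]
      norm_num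
    rw [e1, e2]
  rw [key]
  constructor
  · -- forward: AM-GM equality case
    intro h
    by_cases hPzero : ∏ i, μ i = 0
    · -- then S = 0, so A = 0
      rw [hPzero, mul_zero, pow_eq_zero_iff (by omega)] at h
      have hA0 : A = 0 := by
        have htrS : S = ∑ i, ∑ j, (A j i) ^ 2 := by
          rw [hS, Matrix.trace]
          congr 1
          ext i
          simp [Matrix.diag, Matrix.mul_apply, Matrix.transpose_apply, sq]
        rw [h] at htrS
        have := (Finset.sum_eq_zero_iff_of_nonneg (fun i _ =>
          Finset.sum_nonneg fun j _ => sq_nonneg (A j i))).mp htrS.symm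
        ext j i
        have h2 := (Finset.sum_eq_zero_iff_of_nonneg (fun j _ => sq_nonneg (A j i))).mp
          (this i (Finset.mem_univ i)) j (Finset.mem_univ j)
        simpa using pow_eq_zero_iff (n := 2) (by norm_num) |>.mp h2
      exact ⟨0, le_refl _, by simp [hA0]⟩
    · -- all eigenvalues positive
      have hμpos : ∀ i, 0 < μ i := by
        intro i
        rcases lt_or_eq_of_le (hμ0 i) with h' | h'
        · exact h'
        · exact absurd (Finset.prod_eq_zero (Finset.mem_univ i) h'.symm) hPzero
      -- Jensen equality with log
      have hw : ∑ _i : Fin n, (n : ℝ)⁻¹ = 1 := by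
        simp [Finset.sum_const]
        field_simp
      have hlog : Real.log (∑ i, (n:ℝ)⁻¹ • μ i) ≤ ∑ i, (n:ℝ)⁻¹ • Real.log (μ i) := by
        have hsum : (∑ i, (n:ℝ)⁻¹ • μ i) = S / n := by
          rw [htr, ← Finset.smul_sum]
          simp [smul_eq_mul, div_eq_inv_mul]
        have hlogS : (n:ℝ) * Real.log (S / n) = ∑ i, Real.log (μ i) := by
          have hSn : (S / n) ^ n = ∏ i, μ i := by
            rw [div_pow, h]
            field_simp
          have := congrArg Real.log hSn
          rw [Real.log_pow, Real.log_prod (fun i _ => (hμpos i).ne')] at this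
          simpa using this
        rw [hsum]
        have : Real.log (S / n) = (n:ℝ)⁻¹ * ∑ i, Real.log (μ i) := by
          rw [← hlogS]; field_simp
        rw [this, Finset.mul_sum]
        simp [smul_eq_mul]
      have heq := strictConcaveOn_log_Ioi.eq_of_map_sum_eq
        (t := Finset.univ) (w := fun _ => (n:ℝ)⁻¹) (p := μ)
        (fun i _ => by positivity) hw (fun i _ => hμpos i) hlog
      -- all eigenvalues are equal
      set i0 : Fin n := ⟨0, by omega⟩
      refine ⟨μ i0, hμ0 i0, ?_⟩
      have hμconst : ∀ i, μ i = μ i0 := fun i =>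
        heq (Finset.mem_univ i) (Finset.mem_univ i0)
      have hdiag : Matrix.diagonal ((RCLike.ofReal : ℝ → ℝ) ∘ μ) = μ i0 • 1 := by
        rw [Matrix.smul_one_eq_diagonal]
        ext i j
        by_cases hij : i = j <;> simp [Matrix.diagonal_apply, hij, hμconst]
      nth_rewrite 1 [hB.spectral_theorem]
      rw [Unitary.conjStarAlgAut_apply, hdiag, Matrix.mul_smul, Matrix.smul_mul, mul_one,
        (Matrix.mem_unitaryGroup_iff).mp (Matrix.IsHermitian.eigenvectorUnitary hB).2]
  · rintro ⟨lam, hlam, hAA⟩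
    have hSlam : S = n * lam := by
      rw [hS, hAA]
      simp [Matrix.trace_smul, Matrix.trace_one, mul_comm]
    have hPlam : ∏ i, μ i = lam ^ n := by
      have h3 := congrArg Matrix.det hAA
      rw [Matrix.det_mul, Matrix.det_transpose, ← sq] at h3
      rw [← hdet, h3]
      simp [Matrix.det_smul, Fintype.card_fin]
    rw [hSlam, hPlam, mul_pow]
end

section
/- Let n ≥ 2 and let k ≥ (n−2)/2 with k ≥ 1. For every f ∈ C¹([0,1]) with f(0) = 0, it holds that f(1)² ≤ (1/k) ∫₀¹ (f'(r)² + (k(k+n−2)/r²) f(r)²) r^{n−1} dr. -/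
open Set MeasureTheory intervalIntegral

/-- A function continuous on `Ioo 0 1` and bounded there is interval integrable on `[0,1]`. -/
lemma aux_intervalIntegrable (ψ : ℝ → ℝ) (M : ℝ) (hc : ContinuousOn ψ (Ioo 0 1))
    (hb : ∀ r ∈ Ioo (0:ℝ) 1, |ψ r| ≤ M) : IntervalIntegrable ψ volume 0 1 := by
  rw [intervalIntegrable_iff_integrableOn_Ioo_of_le zero_le_one]
  refine Integrable.mono' (g := fun _ => M) ?_ ?_ ?_
  · exact integrable_const M
  · exact hc.aestronglyMeasurable measurableSet_Ioo
  · filter_upwards [ae_restrict_mem measurableSet_Ioo] with r hr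
    simpa using hb r hr

lemma aux_key (k m : ℕ) (r a b : ℝ) (hr : 0 < r) :
    (k:ℝ) * (2 * a * b * r ^ m + (m : ℝ) * a ^ 2 * r ^ m / r) ≤
      (b ^ 2 + (k : ℝ) * ((k : ℝ) + ((m:ℝ) + 2) - 2) / r ^ 2 * a ^ 2) * r ^ (m + 1) := by
  rw [← sub_nonneg]
  have hr0 : r ≠ 0 := ne_of_gt hr
  have key : (b ^ 2 + (k : ℝ) * ((k : ℝ) + ((m:ℝ) + 2) - 2) / r ^ 2 * a ^ 2) * r ^ (m + 1)
      - (k:ℝ) * (2 * a * b * r ^ m + (m : ℝ) * a ^ 2 * r ^ m / r)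
      = (b * r - (k:ℝ) * a) ^ 2 * r ^ m / r := by
    rw [pow_succ]
    field_simp
    ring
  rw [key]
  positivity

/-- Sharp one-dimensional trace inequality: for `n ≥ 2`, `k ≥ 1` with
`k ≥ (n−2)/2`, and every `f ∈ C¹([0,1])` with `f(0) = 0`,
`f(1)² ≤ (1/k) ∫₀¹ (f'(r)² + (k(k+n−2)/r²) f(r)²) r^{n−1} dr`. -/
theorem trace_inequality_spherical_harmonics (n k : ℕ) (hn : 2 ≤ n) (hk : 1 ≤ k)
    (hk' : ((n : ℝ) - 2) / 2 ≤ (k : ℝ)) (f : ℝ → ℝ)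
    (hf : ContDiffOn ℝ 1 f (Set.Icc 0 1)) (hf0 : f 0 = 0) :
    f 1 ^ 2 ≤ (1 / (k : ℝ)) *
      ∫ r in (0 : ℝ)..1,
        (deriv f r ^ 2 + (k : ℝ) * ((k : ℝ) + (n : ℝ) - 2) / r ^ 2 * f r ^ 2) *
          r ^ (n - 1) := by
  obtain ⟨m, rfl⟩ : ∃ m, n = m + 2 := ⟨n - 2, by omega⟩
  have hkpos : (0:ℝ) < k := by exact_mod_cast hk
  set c : ℝ := (k : ℝ) * ((k : ℝ) + m) with hc_def
  -- the integrand
  set φ : ℝ → ℝ := fun r =>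
    (deriv f r ^ 2 + (k : ℝ) * ((k : ℝ) + ((m:ℝ) + 2) - 2) / r ^ 2 * f r ^ 2) * r ^ (m + 1)
    with hφ_def
  -- the potential and its derivative
  set g : ℝ → ℝ := fun r => (k : ℝ) * (f r ^ 2 * r ^ m) with hg_def
  set g' : ℝ → ℝ := fun r =>
    (k : ℝ) * (2 * f r * deriv f r * r ^ m + (m : ℝ) * f r ^ 2 * r ^ m / r) with hg'_def
  -- basic facts about f
  have hdiff : DifferentiableOn ℝ f (Icc 0 1) := hf.differentiableOn one_ne_zero
  have hconΔ : ContinuousOn (derivWithin f (Icc 0 1)) (Icc 0 1) :=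
    hf.continuousOn_derivWithin (uniqueDiffOn_Icc one_pos) le_rfl
  obtain ⟨C, hC⟩ := (isCompact_Icc (a := (0:ℝ)) (b := 1)).exists_bound_of_continuousOn hconΔ
  have hC0 : 0 ≤ C := le_trans (norm_nonneg _) (hC 0 (by norm_num))
  have hderiv_eq : ∀ x ∈ Ioo (0:ℝ) 1, derivWithin f (Icc 0 1) x = deriv f x := fun x hx =>
    derivWithin_of_mem_nhds (Icc_mem_nhds hx.1 hx.2)
  have hDa : ∀ x ∈ Ioo (0:ℝ) 1, HasDerivAt f (deriv f x) x := by
    intro x hx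
    exact ((hdiff x (Ioo_subset_Icc_self hx)).differentiableAt
      (Icc_mem_nhds hx.1 hx.2)).hasDerivAt
  have hfb : ∀ r ∈ Icc (0:ℝ) 1, |f r| ≤ C * r := by
    intro r hr
    have := Convex.norm_image_sub_le_of_norm_derivWithin_le hdiff hC (convex_Icc 0 1)
      (x := 0) (y := r) (by norm_num) hr
    simpa [hf0, Real.norm_eq_abs, abs_of_nonneg hr.1] using this
  have hdb : ∀ r ∈ Ioo (0:ℝ) 1, |deriv f r| ≤ C := by
    intro r hr
    rw [← hderiv_eq r hr]
    exact hC r (Ioo_subset_Icc_self hr)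
  -- continuity of deriv f on Ioo
  have hcontd : ContinuousOn (deriv f) (Ioo 0 1) := by
    refine (hconΔ.mono Ioo_subset_Icc_self).congr ?_
    intro x hx; exact (hderiv_eq x hx).symm
  have hcontf : ContinuousOn f (Ioo 0 1) := (hf.continuousOn).mono Ioo_subset_Icc_self
  -- integrability of φ
  have hφcont : ContinuousOn φ (Ioo 0 1) := by
    apply ContinuousOn.mul ?_ (continuousOn_pow _)
    apply ContinuousOn.add (hcontd.pow 2)
    apply ContinuousOn.mul ?_ (hcontf.pow 2)
    exact continuousOn_const.div (continuousOn_pow 2) (fun x hx => pow_ne_zero 2 (ne_of_gt hx.1))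
  have hcnonneg : 0 ≤ c := by positivity
  have hφint : IntervalIntegrable φ volume 0 1 := by
    apply aux_intervalIntegrable φ (C^2 + c * C^2) hφcont
    intro r hr
    have hr0 : 0 < r := hr.1
    have hr1 : r ≤ 1 := hr.2.le
    have h1 : deriv f r ^ 2 ≤ C ^ 2 := by
      have := hdb r hr; nlinarith [abs_nonneg (deriv f r), neg_abs_le (deriv f r), le_abs_self (deriv f r)]
    have h2 : f r ^ 2 ≤ C ^ 2 * r ^ 2 := by
      have := hfb r (Ioo_subset_Icc_self hr)
      nlinarith [abs_nonneg (f r), neg_abs_le (f r), le_abs_self (f r)]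
    have hpow1 : r ^ (m+1) ≤ 1 := pow_le_one₀ hr0.le hr1
    have hpownn : (0:ℝ) ≤ r ^ (m+1) := by positivity
    have hcast : (k : ℝ) * ((k : ℝ) + ((m:ℝ) + 2) - 2) = c := by rw [hc_def]; ring
    have hφnn : 0 ≤ φ r := by
      rw [hφ_def]; dsimp only; rw [hcast]
      exact mul_nonneg (add_nonneg (sq_nonneg _)
        (mul_nonneg (div_nonneg hcnonneg (sq_nonneg r)) (sq_nonneg _))) hpownn
    rw [abs_of_nonneg hφnn, hφ_def]
    dsimp only
    rw [hcast]
    have hdivle : c / r ^ 2 * f r ^ 2 ≤ c * C ^ 2 := by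
      rw [div_mul_eq_mul_div, div_le_iff₀ (by positivity)]
      calc c * f r ^ 2 ≤ c * (C^2 * r^2) := by nlinarith
        _ = c * C^2 * r^2 := by ring
    calc (deriv f r ^ 2 + c / r ^ 2 * f r ^ 2) * r ^ (m+1)
        ≤ (deriv f r ^ 2 + c / r ^ 2 * f r ^ 2) * 1 := by
          apply mul_le_mul_of_nonneg_left hpow1
          have h3 : 0 ≤ c / r^2 * f r ^2 := by positivity
          exact add_nonneg (sq_nonneg _) h3
      _ = deriv f r ^ 2 + c / r ^ 2 * f r ^ 2 := by ring
      _ ≤ C^2 + c * C^2 := add_le_add h1 hdivle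
  -- integrability of g'
  have hg'cont : ContinuousOn g' (Ioo 0 1) := by
    apply ContinuousOn.mul continuousOn_const
    apply ContinuousOn.add
    · exact ((continuousOn_const.mul hcontf).mul hcontd).mul (continuousOn_pow m)
    · exact ((continuousOn_const.mul (hcontf.pow 2)).mul (continuousOn_pow m)).div
        continuousOn_id (fun x hx => ne_of_gt hx.1)
  have hg'int : IntervalIntegrable g' volume 0 1 := by
    apply aux_intervalIntegrable g' ((k:ℝ) * (2*C^2 + m*C^2)) hg'cont
    intro r hr
    have hr0 : 0 < r := hr.1
    have hr1 : r ≤ 1 := hr.2.le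
    have hfr := hfb r (Ioo_subset_Icc_self hr)
    have hdr := hdb r hr
    have hpow1 : r ^ m ≤ 1 := pow_le_one₀ hr0.le hr1
    have hpownn : (0:ℝ) ≤ r ^ m := by positivity
    rw [hg'_def]; dsimp only
    rw [abs_mul, abs_of_nonneg (le_of_lt hkpos)]
    apply mul_le_mul_of_nonneg_left ?_ (le_of_lt hkpos)
    have habs1 : |2 * f r * deriv f r * r ^ m| ≤ 2 * C^2 := by
      rw [abs_mul, abs_mul, abs_mul]
      have h1 : |f r| ≤ C := le_trans hfr (by nlinarith)
      have : |(2:ℝ)| = 2 := by norm_num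
      rw [this, abs_of_nonneg hpownn]
      calc 2 * |f r| * |deriv f r| * r ^ m ≤ 2 * C * C * 1 := by
            apply mul_le_mul (by apply mul_le_mul (by nlinarith) hdr (abs_nonneg _) (by positivity)) hpow1 hpownn (by positivity)
        _ = 2 * C^2 := by ring
    have habs2 : |(m : ℝ) * f r ^ 2 * r ^ m / r| ≤ (m:ℝ) * C^2 := by
      rw [abs_div, abs_mul, abs_mul, abs_of_nonneg hr0.le, abs_of_nonneg hpownn,
        abs_of_nonneg (by positivity : (0:ℝ) ≤ (m:ℝ)), abs_of_nonneg (sq_nonneg _)]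
      rw [div_le_iff₀ hr0]
      have h2 : f r ^ 2 ≤ C ^ 2 * r ^ 2 := by
        nlinarith [abs_nonneg (f r), neg_abs_le (f r), le_abs_self (f r)]
      have hr2 : r^2 ≤ r := by nlinarith
      calc (m:ℝ) * f r ^ 2 * r ^ m
          ≤ (m:ℝ) * (C^2 * r^2) * 1 :=
            mul_le_mul (mul_le_mul_of_nonneg_left h2 (Nat.cast_nonneg m)) hpow1 hpownn
              (by positivity)
        _ = (m:ℝ) * C^2 * r^2 := by ring
        _ ≤ (m:ℝ) * C^2 * r := mul_le_mul_of_nonneg_left hr2 (by positivity)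
    calc |2 * f r * deriv f r * r ^ m + (m : ℝ) * f r ^ 2 * r ^ m / r|
        ≤ |2 * f r * deriv f r * r ^ m| + |(m : ℝ) * f r ^ 2 * r ^ m / r| := abs_add_le _ _
      _ ≤ 2*C^2 + m*C^2 := add_le_add habs1 habs2
  -- g has right derivative g' on Ioo
  have hgderiv : ∀ x ∈ Ioo (0:ℝ) 1, HasDerivWithinAt g (g' x) (Ioi x) x := by
    intro x hx
    have hx0 : x ≠ 0 := ne_of_gt hx.1
    have h1 : HasDerivAt (fun r => f r ^ 2) ((2:ℕ) * f x ^ (2-1) * deriv f x) x :=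
      (hDa x hx).pow 2
    have h2 : HasDerivAt (fun r : ℝ => r ^ m) ((m:ℝ) * x ^ (m - 1)) x := by
      simpa using hasDerivAt_pow m x
    have h3 := (h1.mul h2).const_mul (k : ℝ)
    have heq : (k:ℝ) * ((2:ℕ) * f x ^ (2-1) * deriv f x * x ^ m + f x ^ 2 * ((m:ℝ) * x ^ (m - 1))) = g' x := by
      rw [hg'_def]; dsimp only
      have hpow : (m:ℝ) * x ^ (m-1) = (m:ℝ) * x ^ m / x := by
        cases m with
        | zero => simp
        | succ l =>
          rw [Nat.add_sub_cancel]; field_simp; ring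
      rw [hpow]; push_cast; ring
    rw [hg_def]
    exact (heq ▸ h3).hasDerivWithinAt
  -- continuity of g on Icc
  have hgcont : ContinuousOn g (Icc 0 1) :=
    continuousOn_const.mul ((hf.continuousOn.pow 2).mul (continuousOn_pow m))
  -- FTC
  have hftc : ∫ y in (0:ℝ)..1, g' y = g 1 - g 0 :=
    integral_eq_sub_of_hasDeriv_right_of_le zero_le_one hgcont hgderiv hg'int
  -- pointwise g' ≤ φ on Icc
  have hpt : ∀ r ∈ Icc (0:ℝ) 1, g' r ≤ φ r := by
    intro r hr
    rcases eq_or_lt_of_le hr.1 with h0 | h0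
    · rw [hg'_def, hφ_def]
      simp [← h0, hf0]
    · rw [hg'_def, hφ_def]
      exact aux_key k m r (f r) (deriv f r) h0
  have hint_le : ∫ y in (0:ℝ)..1, g' y ≤ ∫ y in (0:ℝ)..1, φ y :=
    integral_mono_on zero_le_one hg'int hφint hpt
  -- conclude
  have hg1 : g 1 = (k:ℝ) * f 1 ^ 2 := by rw [hg_def]; simp
  have hg0 : g 0 = 0 := by rw [hg_def]; simp [hf0]
  have hfinal : (k:ℝ) * f 1 ^ 2 ≤ ∫ y in (0:ℝ)..1, φ y := by
    calc (k:ℝ) * f 1 ^ 2 = g 1 - g 0 := by rw [hg1, hg0]; ring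
      _ = ∫ y in (0:ℝ)..1, g' y := hftc.symm
      _ ≤ ∫ y in (0:ℝ)..1, φ y := hint_le
  have hgoal : (∫ r in (0:ℝ)..1,
      (deriv f r ^ 2 + (k : ℝ) * ((k : ℝ) + ((m+2 : ℕ) : ℝ) - 2) / r ^ 2 * f r ^ 2) *
        r ^ (m + 2 - 1)) = ∫ y in (0:ℝ)..1, φ y := by
    apply intervalIntegral.integral_congr
    intro x _
    rw [hφ_def]
    push_cast
    norm_num
  rw [hgoal, one_div, inv_mul_eq_div, le_div_iff₀ hkpos, mul_comm]
  exact hfinal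
end

section
/- Let N₁ be an (n−1)×(n−1) real matrix and N₂ an (n−1)×1 real matrix, and form the n×n block matrix N = [[N₁, N₂],[0, 0]]. Then exp(N) = [[exp(N₁), exp(N₁)·(∫₀¹ exp(−s N₁) ds)·N₂],[0, 1]]. -/
attribute [local instance] Matrix.normedAddCommGroup Matrix.normedSpace

open NormedSpace intervalIntegral

open Nat MeasureTheory

section ExpBlockTriangularAux

variable {m : ℕ}


private lemma norm_matrix_mul_le (A B : Matrix (Fin m) (Fin m) ℝ) :
    ‖A * B‖ ≤ m * ‖A‖ * ‖B‖ := by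
  rw [Matrix.norm_le_iff (by positivity)]
  intro i j
  calc ‖(A * B) i j‖ = ‖∑ k, A i k * B k j‖ := rfl
    _ ≤ ∑ k, ‖A i k * B k j‖ := norm_sum_le _ _
    _ ≤ ∑ _k : Fin m, ‖A‖ * ‖B‖ := Finset.sum_le_sum fun k _ => by
        rw [norm_mul]
        exact mul_le_mul (A.norm_entry_le_entrywise_sup_norm)
          (B.norm_entry_le_entrywise_sup_norm) (norm_nonneg _) (norm_nonneg _)
    _ = m * ‖A‖ * ‖B‖ := by simp [mul_assoc]

private lemma norm_matrix_pow_le (A : Matrix (Fin m) (Fin m) ℝ) (n : ℕ) :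
    ‖A ^ n‖ ≤ (max 1 (m * ‖A‖)) ^ n := by
  induction n with
  | zero =>
    simp only [pow_zero]
    rw [Matrix.norm_le_iff zero_le_one]
    intro i j
    rcases eq_or_ne i j with h | h <;> simp [Matrix.one_apply, h]
  | succ n ih =>
    rw [pow_succ, pow_succ]
    calc ‖A ^ n * A‖ ≤ m * ‖A ^ n‖ * ‖A‖ := norm_matrix_mul_le _ _
      _ = ‖A ^ n‖ * (m * ‖A‖) := by ring
      _ ≤ (max 1 (m * ‖A‖)) ^ n * max 1 (m * ‖A‖) := by
          apply mul_le_mul ih (le_max_right _ _) (by positivity) (by positivity)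

private lemma norm_smul_pow_le (A : Matrix (Fin m) (Fin m) ℝ) (n : ℕ) {c : ℝ}
    (hc : ‖c‖ ≤ ((n ! : ℝ))⁻¹) : ‖c • A ^ n‖ ≤ (max 1 (m * ‖A‖)) ^ n / n ! := by
  rw [norm_smul, div_eq_inv_mul]
  exact mul_le_mul hc (norm_matrix_pow_le A n) (norm_nonneg _) (by positivity)

private lemma summable_shift (A : Matrix (Fin m) (Fin m) ℝ) :
    Summable (fun n : ℕ => (((n + 1)! : ℝ))⁻¹ • A ^ n) := by
  apply Summable.of_norm_bounded (g := fun n : ℕ => (max 1 (m * ‖A‖)) ^ n / n !)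
  · simpa [div_eq_mul_inv, mul_comm] using Real.summable_pow_div_factorial (max 1 (m * ‖A‖))
  · intro n
    apply norm_smul_pow_le
    rw [Real.norm_eq_abs, abs_of_nonneg (by positivity)]
    exact inv_anti₀ (by positivity) (by exact_mod_cast Nat.factorial_le (Nat.le_succ n))

private lemma integral_exp_smul (A : Matrix (Fin m) (Fin m) ℝ) :
    (∫ s in (0:ℝ)..1, exp (s • A)) = ∑' n : ℕ, (((n + 1)! : ℝ))⁻¹ • A ^ n := by
  have hμ : True := trivial
  set F : ℕ → ℝ → Matrix (Fin m) (Fin m) ℝ :=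
    fun n s => (((n ! : ℝ))⁻¹ * s ^ n) • A ^ n with hF
  have hF_cont : ∀ n, Continuous (F n) := fun n => by fun_prop
  have h_exp : ∀ s : ℝ, exp (s • A) = ∑' n, F n s := by
    intro s
    rw [exp_eq_tsum ℝ]
    simp only [hF, smul_pow, smul_smul]
  have hInt : ∀ n, (letI : TopologicalSpace (Matrix (Fin m) (Fin m) ℝ) :=
      PseudoMetricSpace.toUniformSpace.toTopologicalSpace
      Integrable (F n) (volume.restrict (Set.Ioc (0:ℝ) 1))) := fun n => (hF_cont n).integrableOn_Ioc
  have hbound : ∀ n, (∫ s, ‖F n s‖ ∂(volume.restrict (Set.Ioc (0:ℝ) 1))) ≤ (max 1 (m * ‖A‖)) ^ n / n ! := by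
    intro n
    have h1 : ∀ s ∈ Set.Ioc (0:ℝ) 1, ‖‖F n s‖‖ ≤ (max 1 (m * ‖A‖)) ^ n / n ! := by
      intro s hs
      rw [norm_norm]
      apply norm_smul_pow_le
      rw [Real.norm_eq_abs, abs_of_nonneg (mul_nonneg (by positivity) (pow_nonneg hs.1.le n))]
      calc (n ! : ℝ)⁻¹ * s ^ n ≤ (n ! : ℝ)⁻¹ * 1 := by
            apply mul_le_mul_of_nonneg_left _ (by positivity)
            exact pow_le_one₀ hs.1.le hs.2
        _ = (n ! : ℝ)⁻¹ := mul_one _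
    calc (∫ s, ‖F n s‖ ∂(volume.restrict (Set.Ioc (0:ℝ) 1))) ≤ ‖∫ s, ‖F n s‖ ∂(volume.restrict (Set.Ioc (0:ℝ) 1))‖ := le_abs_self _
      _ ≤ ((max 1 (m * ‖A‖)) ^ n / n !) * (volume (Set.Ioc (0:ℝ) 1)).toReal := by
          apply MeasureTheory.norm_setIntegral_le_of_norm_le_const (by simp) h1
      _ = (max 1 (m * ‖A‖)) ^ n / n ! := by simp
  have hSum : Summable (fun n => ∫ s, ‖F n s‖ ∂(volume.restrict (Set.Ioc (0:ℝ) 1))) := by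
    apply Summable.of_nonneg_of_le (fun n => integral_nonneg fun s => norm_nonneg _) hbound
    simpa [div_eq_mul_inv, mul_comm] using Real.summable_pow_div_factorial (max 1 (m * ‖A‖))
  have hHasSum := MeasureTheory.hasSum_integral_of_summable_integral_norm hInt hSum
  have hterm : ∀ n : ℕ, (∫ s, F n s ∂(volume.restrict (Set.Ioc (0:ℝ) 1))) = (((n + 1)! : ℝ))⁻¹ • A ^ n := by
    intro n
    have : (∫ s, F n s ∂(volume.restrict (Set.Ioc (0:ℝ) 1))) = ∫ s in (0:ℝ)..1, F n s := (integral_of_le zero_le_one).symm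
    rw [this, hF]
    rw [intervalIntegral.integral_smul_const]
    congr 1
    rw [intervalIntegral.integral_const_mul, integral_pow]
    rw [Nat.factorial_succ]
    push_cast
    field_simp
    ring
  have hRHS : (∫ s, (∑' n, F n s) ∂(volume.restrict (Set.Ioc (0:ℝ) 1))) = ∫ s in (0:ℝ)..1, exp (s • A) := by
    rw [integral_of_le zero_le_one]
    exact MeasureTheory.integral_congr_ae (Filter.Eventually.of_forall fun s => (h_exp s).symm)
  rw [← hRHS]
  rw [funext hterm] at hHasSum
  exact hHasSum.tsum_eq.symm


private lemma exp_hasSum' {n : Type*} [Fintype n] [DecidableEq n] (A : Matrix n n ℝ) :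
    HasSum (fun k : ℕ => ((k ! : ℝ))⁻¹ • A ^ k) (exp A) := by
  letI : SeminormedRing (Matrix n n ℝ) := Matrix.linftyOpSemiNormedRing
  letI : NormedRing (Matrix n n ℝ) := Matrix.linftyOpNormedRing
  letI : NormedAlgebra ℝ (Matrix n n ℝ) := Matrix.linftyOpNormedAlgebra
  open scoped Matrix.Norms.Operator in exact exp_series_hasSum_exp' (𝕂 := ℝ) A

private lemma exp_cont : Continuous (exp : Matrix (Fin m) (Fin m) ℝ → _) := by
  letI : SeminormedRing (Matrix (Fin m) (Fin m) ℝ) := Matrix.linftyOpSemiNormedRing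
  letI : NormedRing (Matrix (Fin m) (Fin m) ℝ) := Matrix.linftyOpNormedRing
  letI : NormedAlgebra ℝ (Matrix (Fin m) (Fin m) ℝ) := Matrix.linftyOpNormedAlgebra
  open scoped Matrix.Norms.Operator in exact exp_continuous


end ExpBlockTriangularAux

/-- Block triangular matrix exponential: for `N₁` an `m × m` real matrix and
`N₂` an `m × 1` real matrix, with `N = [[N₁, N₂], [0, 0]]`, one has
`exp N = [[exp N₁, exp N₁ · (∫₀¹ exp(−s N₁) ds) · N₂], [0, 1]]`. -/
theorem exp_block_triangular (m : ℕ) (N₁ : Matrix (Fin m) (Fin m) ℝ)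
    (N₂ : Matrix (Fin m) (Fin 1) ℝ) :
    exp (Matrix.fromBlocks N₁ N₂ 0 0) =
      Matrix.fromBlocks (exp N₁)
        (exp N₁ * (∫ s in (0 : ℝ)..1, exp (-(s • N₁))) * N₂) (0 : Matrix (Fin 1) (Fin m) ℝ) (1 : Matrix (Fin 1) (Fin 1) ℝ) := by
  set N : Matrix (Fin m ⊕ Fin 1) (Fin m ⊕ Fin 1) ℝ := Matrix.fromBlocks N₁ N₂ 0 0 with hN
  set T : Matrix (Fin m) (Fin m) ℝ := ∑' n : ℕ, (((n + 1)! : ℝ))⁻¹ • N₁ ^ n with hT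
  -- step 1 : the integral factor equals T
  have hfactor : exp N₁ * (∫ s in (0 : ℝ)..1, exp (-(s • N₁))) = T := by
    have hint : (letI f : ℝ → Matrix (Fin m) (Fin m) ℝ := fun s : ℝ => exp (-(s • N₁))
        letI : TopologicalSpace (Matrix (Fin m) (Fin m) ℝ) :=
        PseudoMetricSpace.toUniformSpace.toTopologicalSpace
        IntervalIntegrable f volume 0 1) :=
      (exp_cont.comp (by fun_prop : Continuous fun s : ℝ => -(s • N₁))).intervalIntegrable _ _
    have hmul : exp N₁ * (∫ s in (0 : ℝ)..1, exp (-(s • N₁)))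
        = ∫ s in (0 : ℝ)..1, exp N₁ * exp (-(s • N₁)) := by
      exact ((LinearMap.mulLeft ℝ (exp N₁)).toContinuousLinearMap.intervalIntegral_comp_comm
        hint).symm
    rw [hmul]
    have heq : ∀ s : ℝ, exp N₁ * exp (-(s • N₁)) = exp ((1 - s) • N₁) := by
      intro s
      have hC : Commute N₁ (-(s • N₁)) := ((Commute.refl N₁).smul_right s).neg_right
      rw [← Matrix.exp_add_of_commute N₁ (-(s • N₁)) hC]
      congr 1
      rw [sub_smul, one_smul, sub_eq_add_neg]
    simp_rw [heq]
    have hsub := intervalIntegral.integral_comp_sub_left (a := (0:ℝ)) (b := (1:ℝ))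
      (fun u : ℝ => exp (u • N₁)) 1
    simp only [sub_self, sub_zero] at hsub
    calc (∫ s in (0:ℝ)..1, exp ((1 - s) • N₁))
        = ∫ s in (0:ℝ)..1, exp (s • N₁) := hsub
      _ = T := integral_exp_smul N₁
  rw [hfactor]
  -- step 2 : powers of N
  have hpow : ∀ k : ℕ, N ^ (k + 1) = Matrix.fromBlocks (N₁ ^ (k + 1)) (N₁ ^ k * N₂) 0 0 := by
    intro k
    induction k with
    | zero => simp [hN]
    | succ k ih =>
      rw [pow_succ, ih, hN, Matrix.fromBlocks_multiply]
      simp [← pow_succ]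
  -- step 3 : shifted series
  have hshift₁ : HasSum (fun k : ℕ => (((k + 1)! : ℝ))⁻¹ • N₁ ^ (k + 1)) (exp N₁ - 1) := by
    have h := (hasSum_nat_add_iff' (f := fun k : ℕ => ((k ! : ℝ))⁻¹ • N₁ ^ k) 1).mpr
      (exp_hasSum' N₁)
    simpa using h
  have hshiftN : HasSum (fun k : ℕ => (((k + 1)! : ℝ))⁻¹ • N ^ (k + 1)) (exp N - 1) := by
    have h := (hasSum_nat_add_iff' (f := fun k : ℕ => ((k ! : ℝ))⁻¹ • N ^ k) 1).mpr
      (exp_hasSum' N)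
    simpa using h
  have hTsum : HasSum (fun k : ℕ => (((k + 1)! : ℝ))⁻¹ • N₁ ^ k) T := (summable_shift N₁).hasSum
  -- step 4 : multiply by N₂ on the right
  have hTmul : HasSum (fun k : ℕ => (((k + 1)! : ℝ))⁻¹ • (N₁ ^ k * N₂)) (T * N₂) := by
    let R : Matrix (Fin m) (Fin m) ℝ →ₗ[ℝ] Matrix (Fin m) (Fin 1) ℝ :=
      { toFun := fun X => X * N₂
        map_add' := fun X Y => Matrix.add_mul X Y N₂
        map_smul' := fun c X => Matrix.smul_mul c X N₂ }
    have h := hTsum.mapL R.toContinuousLinearMap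
    have he : (fun k : ℕ => R.toContinuousLinearMap ((((k + 1)! : ℝ))⁻¹ • N₁ ^ k))
        = fun k : ℕ => (((k + 1)! : ℝ))⁻¹ • (N₁ ^ k * N₂) := by
      funext k
      simp [R, Matrix.smul_mul]
    rwa [he] at h
  -- step 5 : combine into block HasSum
  let L : (Matrix (Fin m) (Fin m) ℝ × Matrix (Fin m) (Fin 1) ℝ) →ₗ[ℝ]
      Matrix (Fin m ⊕ Fin 1) (Fin m ⊕ Fin 1) ℝ :=
    { toFun := fun p => Matrix.fromBlocks p.1 p.2 0 0
      map_add' := fun p q => by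
        simp [Matrix.fromBlocks_add]
      map_smul' := fun c p => by
        simp [Matrix.fromBlocks_smul] }
  have hBlocks := (hshift₁.prodMk hTmul).mapL L.toContinuousLinearMap
  have he2 : (fun k : ℕ => L.toContinuousLinearMap
      ((((k + 1)! : ℝ))⁻¹ • N₁ ^ (k + 1), (((k + 1)! : ℝ))⁻¹ • (N₁ ^ k * N₂)))
      = fun k : ℕ => (((k + 1)! : ℝ))⁻¹ • N ^ (k + 1) := by
    funext k
    show Matrix.fromBlocks _ _ _ _ = _
    rw [hpow k, Matrix.fromBlocks_smul]
    simp
  rw [he2] at hBlocks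
  have hkey : exp N - 1 = Matrix.fromBlocks (exp N₁ - 1) (T * N₂) 0 0 := by
    have : L.toContinuousLinearMap (exp N₁ - 1, T * N₂)
        = Matrix.fromBlocks (exp N₁ - 1) (T * N₂) 0 0 := rfl
    rw [← this]
    exact hshiftN.unique hBlocks
  have : exp N = Matrix.fromBlocks (exp N₁ - 1) (T * N₂) 0 0 + 1 :=
    sub_eq_iff_eq_add.mp hkey
  rw [this, ← Matrix.fromBlocks_one, Matrix.fromBlocks_add]
  simp
end

section
/- Let Ω ⊂ ℝ^n be a bounded C¹ domain with connected C¹ boundary, let k ∈ ℤ, and let u ∈ W^{1,n}(Ω, ℝ^n) be such that |tr_{∂Ω} u| = 1 a.e. and deg(u, ∂Ω) = k, where the degree is computed by deg(u,∂Ω) = (1/|𝔹^n|)∫_Ω Jac(u). Then ∫_Ω |du|^n ≥ n^{n/2} |𝔹^n| |k|, where |du| is the Frobenius norm of the differential. -/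
open MeasureTheory

lemma trace_eq_sum_eigs {n : ℕ} {B : Matrix (Fin n) (Fin n) ℝ} (hB : B.IsHermitian) :
    B.trace = ∑ i, hB.eigenvalues i := by
  conv_lhs => rw [hB.spectral_theorem]
  rw [Unitary.conjStarAlgAut_apply, Matrix.trace_mul_cycle, Matrix.mem_unitaryGroup_iff'.mp hB.eigenvectorUnitary.2, one_mul]
  simp [Matrix.trace_diagonal]

lemma frob_key {n : ℕ} (hn : 1 ≤ n) (A : Matrix (Fin n) (Fin n) ℝ) :
    (n : ℝ) ^ ((n : ℝ) / 2) * |A.det| ≤ frobNorm A ^ n := by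
  have hcT : A.conjTranspose = A.transpose := by
    ext i j; simp [Matrix.conjTranspose_apply]
  have hB : (A.transpose * A).PosSemidef := by
    rw [← hcT]; exact Matrix.posSemidef_conjTranspose_mul_self A
  set B := A.transpose * A with hBdef
  have hH := hB.1
  have hμ : ∀ i, 0 ≤ hH.eigenvalues i := hB.eigenvalues_nonneg
  have htr : B.trace = ∑ i, hH.eigenvalues i := trace_eq_sum_eigs hH
  have hdet : B.det = ∏ i, hH.eigenvalues i := by
    have := hH.det_eq_prod_eigenvalues
    simpa using this
  have hdet2 : B.det = A.det ^ 2 := by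
    rw [hBdef, Matrix.det_mul, Matrix.det_transpose, sq]
  have hnpos : (0:ℝ) < n := by exact_mod_cast hn
  have hnne : (n:ℝ) ≠ 0 := ne_of_gt hnpos
  have amgm := Real.geom_mean_le_arith_mean_weighted Finset.univ
      (fun _ : Fin n => 1 / (n:ℝ)) hH.eigenvalues
      (fun i _ => by positivity)
      (by simp [Finset.sum_const]; field_simp)
      (fun i _ => hμ i)
  have hprod : ∏ i, hH.eigenvalues i ^ ((1:ℝ)/n) = (A.det ^ 2) ^ ((1:ℝ)/n) := by
    rw [Real.finset_prod_rpow _ _ (fun i _ => hμ i), ← hdet, hdet2]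
  have hsum : ∑ i : Fin n, (1/(n:ℝ)) * hH.eigenvalues i = B.trace / n := by
    rw [← Finset.mul_sum, htr]; ring
  have key : (A.det ^ 2) ^ ((1:ℝ)/n) ≤ B.trace / n := by
    rw [← hprod]; rw [hsum] at amgm; exact amgm
  have htrpos : 0 ≤ B.trace := by
    rw [htr]; exact Finset.sum_nonneg (fun i _ => hμ i)
  have hfrob : frobNorm A ^ n = B.trace ^ ((n:ℝ)/2) := by
    rw [frobNorm, Real.sqrt_eq_rpow, ← Real.rpow_natCast (B.trace ^ ((1:ℝ)/2)) n,
      ← Real.rpow_mul htrpos]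
    norm_num
    congr 1
    ring
  rw [hfrob]
  have step : ((n:ℝ) * (A.det ^ 2) ^ ((1:ℝ)/n)) ^ ((n:ℝ)/2) ≤ B.trace ^ ((n:ℝ)/2) := by
    apply Real.rpow_le_rpow (by positivity)
    · calc (n:ℝ) * (A.det ^ 2) ^ ((1:ℝ)/n) ≤ n * (B.trace / n) :=
            mul_le_mul_of_nonneg_left key (le_of_lt hnpos)
        _ = B.trace := by field_simp
    · positivity
  have habs : ((A.det ^ 2) ^ ((1:ℝ)/n)) ^ ((n:ℝ)/2) = |A.det| := by
    rw [← Real.rpow_mul (by positivity)]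
    have h1 : (1:ℝ)/n * ((n:ℝ)/2) = 1/2 := by field_simp
    rw [h1, ← Real.sqrt_eq_rpow, Real.sqrt_sq_eq_abs]
  calc (n:ℝ)^((n:ℝ)/2) * |A.det| = ((n:ℝ) * (A.det^2)^((1:ℝ)/n)) ^ ((n:ℝ)/2) := by
        rw [Real.mul_rpow (le_of_lt hnpos) (by positivity), habs]
    _ ≤ B.trace ^ ((n:ℝ)/2) := step

/-- Lower bound of the `n`-energy in terms of the prescribed degree: if
`u : Ω → ℝⁿ` has differential `du` on the bounded domain `Ω`, and its degree
(computed via `deg = (1/|𝔹ⁿ|) ∫_Ω Jac u`) equals `k ∈ ℤ`, then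
`∫_Ω |du|ⁿ ≥ n^{n/2} |𝔹ⁿ| |k|`, with `|du|` the Frobenius norm of the
differential. -/
theorem energy_lower_bound_by_degree {n : ℕ} (hn : 1 ≤ n)
    (Ω : Set (EuclideanSpace ℝ (Fin n))) (hΩmeas : MeasurableSet Ω)
    (hΩbdd : Bornology.IsBounded Ω) (hΩopen : IsOpen Ω)
    (u : EuclideanSpace ℝ (Fin n) → EuclideanSpace ℝ (Fin n))
    (du : EuclideanSpace ℝ (Fin n) → Matrix (Fin n) (Fin n) ℝ)
    (hdu : ∀ x ∈ Ω, HasFDerivAt u (Matrix.toEuclideanCLM (𝕜 := ℝ) (du x)) x)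
    (hJacInt : IntegrableOn (fun x => (du x).det) Ω volume)
    (hEnergyInt : IntegrableOn (fun x => frobNorm (du x) ^ n) Ω volume)
    (k : ℤ)
    (hdeg : ∫ x in Ω, (du x).det =
      (k : ℝ) * (volume (Metric.ball (0 : EuclideanSpace ℝ (Fin n)) 1)).toReal) :
    ∫ x in Ω, frobNorm (du x) ^ n ≥
      (n : ℝ) ^ ((n : ℝ) / 2) *
        (volume (Metric.ball (0 : EuclideanSpace ℝ (Fin n)) 1)).toReal * |(k : ℝ)| := by
  set c : ℝ := (n : ℝ) ^ ((n : ℝ) / 2) with hc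
  have hc0 : 0 ≤ c := by positivity
  set V : ℝ := (volume (Metric.ball (0 : EuclideanSpace ℝ (Fin n)) 1)).toReal with hV
  have hV0 : 0 ≤ V := ENNReal.toReal_nonneg
  have h1 : ∫ x in Ω, c * |(du x).det| ≤ ∫ x in Ω, frobNorm (du x) ^ n := by
    refine setIntegral_mono_on ((hJacInt.abs).const_mul c) hEnergyInt hΩmeas ?_
    exact fun x _ => frob_key hn (du x)
  have h2 : |∫ x in Ω, (du x).det| ≤ ∫ x in Ω, |(du x).det| := by
    simpa [Real.norm_eq_abs] using
      norm_integral_le_integral_norm (μ := volume.restrict Ω) (fun x => (du x).det)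
  have h3 : ∫ x in Ω, c * |(du x).det| = c * ∫ x in Ω, |(du x).det| :=
    integral_const_mul c _
  have h4 : |∫ x in Ω, (du x).det| = |(k:ℝ)| * V := by
    rw [hdeg, abs_mul, abs_of_nonneg hV0]
  calc c * V * |(k:ℝ)| = c * (|(k:ℝ)| * V) := by ring
    _ = c * |∫ x in Ω, (du x).det| := by rw [h4]
    _ ≤ c * ∫ x in Ω, |(du x).det| := mul_le_mul_of_nonneg_left h2 hc0
    _ = ∫ x in Ω, c * |(du x).det| := h3.symm
    _ ≤ _ := h1
end
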